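/- For each choice of graph matrix M ∈ {adjacency matrix A, Laplacian L, normalized Laplacian L̂}: if two finite simple graphs G and H (with no isolated vertices) are 3-WL-indistinguishable, then G and H are EPWL-indistinguishable with respect to M. (The expressive power of EPWL is bounded by 3-WL.) -/

import Mathlib

open scoped Classical
open Matrix BigOperators

noncomputable section

namespace EPWL

/-! ### Generic node-coloring refinement with pairwise features in a type `α` -/

/-- The common nested type of round-`l` colors: `C 0 = Unit`,
`C (l+1) = C l × Multiset (C l × α)`. -/
def Color (α : Type) : ℕ → Type
  | 0 => Unit
  | l + 1 => Color α l × Multiset (Color α l × α)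

/-- The color refinement: `χ⁰(u) = ()` and
`χ^{l+1}(u) = (χ^l(u), {{(χ^l(v), f u v) : v}})`. -/
def colorFn {V : Type*} [Fintype V] {α : Type} (f : V → V → α) :
    (l : ℕ) → V → Color α l
  | 0 => fun _ => ()
  | l + 1 => fun u =>
      (colorFn f l u, Finset.univ.val.map fun v => (colorFn f l v, f u v))

/-- Two graphs (presented through their pairwise-feature functions) are
indistinguishable by the node-coloring refinement: at every round, the
multisets of node colors agree. -/
def NodeIndist {V W : Type*} [Fintype V] [Fintype W] {α : Type}
    (f : V → V → α) (g : W → W → α) : Prop :=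
  ∀ l : ℕ, Finset.univ.val.map (colorFn f l) = Finset.univ.val.map (colorFn g l)

/-- Atomic type of an ordered vertex pair: `0` if equal, `1` if adjacent,
`2` otherwise. -/
def atp {V : Type*} (G : SimpleGraph V) (u v : V) : ℕ :=
  if u = v then 0 else if G.Adj u v then 1 else 2

/-- 1-WL indistinguishability. -/
def WL1Indist {V W : Type*} [Fintype V] [Fintype W]
    (G : SimpleGraph V) (H : SimpleGraph W) : Prop :=
  NodeIndist (atp G) (atp H)

/-! ### Graph matrices -/

/-- Real adjacency matrix. -/
def adjM {V : Type*} [Fintype V] (G : SimpleGraph V) : Matrix V V ℝ :=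
  G.adjMatrix ℝ

/-- Real (diagonal) degree matrix. -/
def degM {V : Type*} [Fintype V] (G : SimpleGraph V) : Matrix V V ℝ :=
  Matrix.diagonal fun v => (G.degree v : ℝ)

/-- Laplacian matrix `L = D - A`. -/
def lapM {V : Type*} [Fintype V] (G : SimpleGraph V) : Matrix V V ℝ :=
  degM G - adjM G

/-- The diagonal matrix `D^{-1/2}`. -/
def invSqrtDegM {V : Type*} [Fintype V] (G : SimpleGraph V) : Matrix V V ℝ :=
  Matrix.diagonal fun v => (Real.sqrt (G.degree v))⁻¹

/-- Normalized Laplacian `L̂ = D^{-1/2} L D^{-1/2}`. -/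
def normLapM {V : Type*} [Fintype V] (G : SimpleGraph V) : Matrix V V ℝ :=
  invSqrtDegM G * lapM G * invSqrtDegM G

/-- Normalized adjacency matrix `Â = D^{-1/2} A D^{-1/2}`. -/
def normAdjM {V : Type*} [Fintype V] (G : SimpleGraph V) : Matrix V V ℝ :=
  invSqrtDegM G * adjM G * invSqrtDegM G

/-- The diagonal matrix `D⁻¹` of inverse degrees. -/
def invDegM {V : Type*} [Fintype V] (G : SimpleGraph V) : Matrix V V ℝ :=
  Matrix.diagonal fun v => ((G.degree v : ℝ))⁻¹

/-- The random-walk matrix `D⁻¹ A`. -/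
def rwM {V : Type*} [Fintype V] (G : SimpleGraph V) : Matrix V V ℝ :=
  invDegM G * adjM G

/-- The all-ones matrix `J`. -/
def allOnes (V : Type*) : Matrix V V ℝ := Matrix.of fun _ _ => 1

/-- A choice among the three graph matrices `A`, `L`, `L̂`. -/
inductive MatChoice | adj | lap | normLap

/-- The graph matrix associated with a choice. -/
def matOf {V : Type*} [Fintype V] (c : MatChoice) (G : SimpleGraph V) :
    Matrix V V ℝ :=
  match c with
  | .adj => adjM G
  | .lap => lapM G
  | .normLap => normLapM G

/-! ### Spectral decompositions and the eigenspace projection invariant -/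

/-- `IsSpectralDecomp M Λ P` says: `Λ` is the (finite) set of distinct
eigenvalues of the symmetric matrix `M` and, for `lam ∈ Λ`, `P lam` is the
orthogonal projection onto the eigenspace of `lam`. This is characterized
uniquely by: the `P lam` are symmetric idempotent nonzero matrices,
pairwise "orthogonal" (`P lam * P mu = 0` for `lam ≠ mu`), summing to the
identity, with `∑ lam • P lam = M`. -/
structure IsSpectralDecomp {n : Type*} [Fintype n]
    (M : Matrix n n ℝ) (Λ : Finset ℝ) (P : ℝ → Matrix n n ℝ) : Prop where
  symm : ∀ lam ∈ Λ, (P lam)ᵀ = P lam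
  idem : ∀ lam ∈ Λ, P lam * P lam = P lam
  nonzero : ∀ lam ∈ Λ, P lam ≠ 0
  orth : ∀ lam ∈ Λ, ∀ mu ∈ Λ, lam ≠ mu → P lam * P mu = 0
  sum_one : ∑ lam ∈ Λ, P lam = 1
  sum_smul : ∑ lam ∈ Λ, lam • P lam = M

/-- The eigenspace projection invariant
`𝒫^M(u,v) = {{(lam, P_lam(u,v)) : lam eigenvalue of M}}`. -/
def projInv {n : Type*} (Λ : Finset ℝ) (P : ℝ → Matrix n n ℝ) (u v : n) :
    Multiset (ℝ × ℝ) :=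
  Λ.val.map fun lam => (lam, P lam u v)

/-! ### Subgraph Weisfeiler-Lehman variants (SWL, PSWL) and 3-WL -/

/-- Round-`l` color type for SWL. -/
def SColor : ℕ → Type
  | 0 => ℕ
  | l + 1 => SColor l × Multiset (SColor l × ℕ)

/-- Initial pair color: `1` on the diagonal, `0` off it. -/
def initPairColor {V : Type*} (u v : V) : ℕ := if u = v then 1 else 0

/-- The SWL pair-coloring. -/
def swl {V : Type*} [Fintype V] (G : SimpleGraph V) :
    (l : ℕ) → V → V → SColor l
  | 0 => fun u v => initPairColor u v
  | l + 1 => fun u v =>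
      (swl G l u v, Finset.univ.val.map fun w => (swl G l u w, atp G v w))

/-- SWL indistinguishability. -/
def SWLIndist {V W : Type*} [Fintype V] [Fintype W]
    (G : SimpleGraph V) (H : SimpleGraph W) : Prop :=
  ∀ l : ℕ,
    ((Finset.univ : Finset (V × V)).val.map fun p => swl G l p.1 p.2) =
      ((Finset.univ : Finset (W × W)).val.map fun p => swl H l p.1 p.2)

/-- Round-`l` color type for PSWL. -/
def PSColor : ℕ → Type
  | 0 => ℕ
  | l + 1 => PSColor l × PSColor l × Multiset (PSColor l × ℕ)

/-- The PSWL pair-coloring. -/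
def pswl {V : Type*} [Fintype V] (G : SimpleGraph V) :
    (l : ℕ) → V → V → PSColor l
  | 0 => fun u v => initPairColor u v
  | l + 1 => fun u v =>
      (pswl G l u v, pswl G l v v,
        Finset.univ.val.map fun w => (pswl G l u w, atp G v w))

/-- PSWL indistinguishability. -/
def PSWLIndist {V W : Type*} [Fintype V] [Fintype W]
    (G : SimpleGraph V) (H : SimpleGraph W) : Prop :=
  ∀ l : ℕ,
    ((Finset.univ : Finset (V × V)).val.map fun p => pswl G l p.1 p.2) =
      ((Finset.univ : Finset (W × W)).val.map fun p => pswl H l p.1 p.2)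

/-- Round-`l` color type for 3-WL; the initial color records which of
`u, v, w` coincide and which of the pairs are edges. -/
def W3Color : ℕ → Type
  | 0 => Bool × Bool × Bool × Bool × Bool × Bool
  | l + 1 => W3Color l × Multiset (W3Color l × W3Color l × W3Color l)

/-- The 3-WL triple-coloring. -/
def wl3 {V : Type*} [Fintype V] (G : SimpleGraph V) :
    (l : ℕ) → V → V → V → W3Color l
  | 0 => fun u v w =>
      (decide (u = v), decide (u = w), decide (v = w),
        decide (G.Adj u v), decide (G.Adj u w), decide (G.Adj v w))
  | l + 1 => fun u v w =>
      (wl3 G l u v w,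
        Finset.univ.val.map fun z =>
          (wl3 G l z v w, wl3 G l u z w, wl3 G l u v z))

/-- 3-WL indistinguishability. -/
def WL3Indist {V W : Type*} [Fintype V] [Fintype W]
    (G : SimpleGraph V) (H : SimpleGraph W) : Prop :=
  ∀ l : ℕ,
    ((Finset.univ : Finset (V × V × V)).val.map fun p => wl3 G l p.1 p.2.1 p.2.2) =
      ((Finset.univ : Finset (W × W × W)).val.map fun p => wl3 H l p.1 p.2.1 p.2.2)

/-! ### Distances -/

/-- The shortest-path distance, valued in `ℕ∞`. -/
def spd {V : Type*} (G : SimpleGraph V) (u v : V) : ℕ∞ := G.edist u v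

/-- The four Penrose conditions characterizing the Moore–Penrose
pseudoinverse `X` of `B`. -/
def IsMoorePenrose {n : Type*} [Fintype n] (B X : Matrix n n ℝ) : Prop :=
  B * X * B = B ∧ X * B * X = X ∧ (B * X)ᵀ = B * X ∧ (X * B)ᵀ = X * B

/-- Resistance distance computed from (a Moore–Penrose pseudoinverse of)
the Laplacian: `X(u,u) + X(v,v) - 2X(u,v)` for vertices in the same
connected component, and `∞` otherwise. -/
def rdOf {V : Type*} (G : SimpleGraph V) (X : Matrix V V ℝ) (u v : V) :
    WithTop ℝ :=
  if G.Reachable u v then ((X u u + X v v - 2 * X u v : ℝ) : WithTop ℝ) else ⊤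

/-- Matrix exponential, as the everywhere-convergent power series
`exp B = ∑ Bⁿ/n!`. -/
def matExp {V : Type*} [Fintype V] (B : Matrix V V ℝ) : Matrix V V ℝ :=
  ∑' n : ℕ, ((n.factorial : ℝ))⁻¹ • B ^ n

/-! ### Connectivity notions -/

/-- Number of connected components. -/
def numComponents {V : Type*} (G : SimpleGraph V) : ℕ :=
  Nat.card G.ConnectedComponent

/-- A cut vertex: deleting it (and all incident edges) strictly increases
the number of connected components. -/
def IsCutVertex {V : Type*} (G : SimpleGraph V) (v : V) : Prop :=
  numComponents G < numComponents (G.induce {w : V | w ≠ v})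

/-- A cut edge: it is an edge whose deletion strictly increases the number
of connected components. -/
def IsCutEdge {V : Type*} (G : SimpleGraph V) (e : Sym2 V) : Prop :=
  e ∈ G.edgeSet ∧ numComponents G < numComponents (G.deleteEdges {e})


/-! ### Auxiliary development -/

section Aux

/-- A default inhabitant of `W3Color m`. -/
def w3default : (m : ℕ) → W3Color m
  | 0 => (true, true, true, true, true, true)
  | m + 1 => (w3default m, 0)

instance (m : ℕ) : Inhabited (W3Color m) := ⟨w3default m⟩

/-- Iterated first projection down to round 0. -/
def w3root : {m : ℕ} → W3Color m → W3Color 0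
  | 0, c => c
  | _ + 1, c => w3root c.1

/-- Projection down `k` rounds. -/
def downN : (m k : ℕ) → W3Color (m + k) → W3Color m
  | _, 0, c => c
  | m, k + 1, c => downN m k c.1

lemma w3root_wl3 {V : Type*} [Fintype V] (G : SimpleGraph V) :
    ∀ (m : ℕ) (u v w : V), w3root (wl3 G m u v w) = wl3 G 0 u v w
  | 0, _, _, _ => rfl
  | m + 1, u, v, w => w3root_wl3 G m u v w

lemma downN_wl3 {V : Type*} [Fintype V] (G : SimpleGraph V) (m : ℕ) :
    ∀ (k : ℕ) (u v w : V), downN m k (wl3 G (m + k) u v w) = wl3 G m u v w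
  | 0, _, _, _ => rfl
  | k + 1, u, v, w => downN_wl3 G m k u v w

/-- Extract the unique element of a singleton multiset. -/
def choose1 {β : Type*} [Inhabited β] (s : Multiset β) : β :=
  if h : ∃ a, s = {a} then h.choose else default

lemma choose1_singleton {β : Type*} [Inhabited β] (a : β) :
    choose1 ({a} : Multiset β) = a := by
  have h : ∃ b, ({a} : Multiset β) = {b} := ⟨a, rfl⟩
  rw [choose1, dif_pos h]
  have := h.choose_spec
  exact (Multiset.singleton_inj.mp this).symm

/-- Generic extraction from the update multiset of a round-`(m+1)` 3-WL color. -/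
def ext {m : ℕ} (pick : W3Color m × W3Color m × W3Color m → Prop)
    (slot : W3Color m × W3Color m × W3Color m → W3Color m) :
    W3Color (m + 1) → W3Color m :=
  fun c => choose1 ((c.2.filter pick).map slot)

lemma ext_eq {V : Type*} [Fintype V] (G : SimpleGraph V) {m : ℕ}
    (pick : W3Color m × W3Color m × W3Color m → Prop)
    (slot : W3Color m × W3Color m × W3Color m → W3Color m)
    (u v w z0 : V)
    (h : ∀ z : V, pick (wl3 G m z v w, wl3 G m u z w, wl3 G m u v z) ↔ z = z0) :
    ext pick slot (wl3 G (m + 1) u v w)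
      = slot (wl3 G m z0 v w, wl3 G m u z0 w, wl3 G m u v z0) := by
  classical
  have h2 : (wl3 G (m + 1) u v w).2
      = Finset.univ.val.map fun z => (wl3 G m z v w, wl3 G m u z w, wl3 G m u v z) := rfl
  rw [ext, h2, Multiset.filter_map]
  have : Multiset.filter
      ((fun t => pick t) ∘ fun z => (wl3 G m z v w, wl3 G m u z w, wl3 G m u v z))
      Finset.univ.val = {z0} := by
    have : Multiset.filter
        ((fun t => pick t) ∘ fun z => (wl3 G m z v w, wl3 G m u z w, wl3 G m u v z))
        Finset.univ.val
        = Multiset.filter (fun z => z = z0) Finset.univ.val := by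
      apply Multiset.filter_congr
      intro z _
      simpa using h z
    rw [this]
    have := Finset.filter_eq' (Finset.univ : Finset V) z0
    simp only [Finset.mem_univ, if_true] at this
    calc Multiset.filter (fun z => z = z0) Finset.univ.val
        = (Finset.filter (fun z => z = z0) Finset.univ).val := rfl
      _ = ({z0} : Finset V).val := by rw [this]
      _ = {z0} := rfl
  rw [this]
  simp only [Multiset.map_singleton]
  exact choose1_singleton _

/-- Extractor `(u,v,w) ↦ (u,v,v)`. -/
def pairE {m : ℕ} : W3Color (m + 1) → W3Color m :=
  ext (fun t => (w3root t.1).1 = true) (fun t => t.2.2)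

lemma pairE_wl3 {V : Type*} [Fintype V] (G : SimpleGraph V) (m : ℕ) (u v w : V) :
    pairE (wl3 G (m + 1) u v w) = wl3 G m u v v := by
  unfold pairE
  refine ext_eq G _ _ u v w v (fun z => ?_)
  show (w3root (wl3 G m z v w)).1 = true ↔ z = v
  rw [w3root_wl3]
  show decide (z = v) = true ↔ z = v
  simp

/-- Extractor `(u,v,w) ↦ (u,u,w)`. -/
def headE {m : ℕ} : W3Color (m + 1) → W3Color m :=
  ext (fun t => (w3root t.2.1).1 = true) (fun t => t.2.1)

lemma headE_wl3 {V : Type*} [Fintype V] (G : SimpleGraph V) (m : ℕ) (u v w : V) :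
    headE (wl3 G (m + 1) u v w) = wl3 G m u u w := by
  unfold headE
  refine ext_eq G _ _ u v w u (fun z => ?_)
  show (w3root (wl3 G m u z w)).1 = true ↔ z = u
  rw [w3root_wl3]
  show decide (u = z) = true ↔ z = u
  simp [eq_comm]

/-- Extract `χ^m(z,z,z)` from `χ^{m+2}(z,u,u)`. -/
def diagE {m : ℕ} : W3Color (m + 2) → W3Color m := fun c => pairE (headE c)

lemma diagE_wl3 {V : Type*} [Fintype V] (G : SimpleGraph V) (m : ℕ) (z u v : V) :
    diagE (wl3 G (m + 2) z u v) = wl3 G m z z z := by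
  rw [diagE, headE_wl3, pairE_wl3]


lemma diag_filter_key {U : Type*} [Fintype U] (K : SimpleGraph U) (m : ℕ) :
    Multiset.filter (fun c : W3Color m => (w3root c).1 = true ∧ (w3root c).2.2.1 = true)
        ((Finset.univ : Finset (U × U × U)).val.map fun p => wl3 K m p.1 p.2.1 p.2.2)
      = Finset.univ.val.map fun u : U => wl3 K m u u u := by
  classical
  rw [Multiset.filter_map]
  have h1 : Multiset.filter
      ((fun c : W3Color m => (w3root c).1 = true ∧ (w3root c).2.2.1 = true) ∘
        fun p : U × U × U => wl3 K m p.1 p.2.1 p.2.2) (Finset.univ : Finset (U × U × U)).val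
      = Multiset.filter (fun p : U × U × U => p.1 = p.2.1 ∧ p.2.1 = p.2.2)
          (Finset.univ : Finset (U × U × U)).val := by
    apply Multiset.filter_congr
    intro p _
    show ((w3root (wl3 K m p.1 p.2.1 p.2.2)).1 = true ∧
        (w3root (wl3 K m p.1 p.2.1 p.2.2)).2.2.1 = true) ↔ _
    rw [w3root_wl3]
    show (decide (p.1 = p.2.1) = true ∧ decide (p.2.1 = p.2.2) = true) ↔ _
    simp
  rw [h1]
  have h2 : Multiset.filter (fun p : U × U × U => p.1 = p.2.1 ∧ p.2.1 = p.2.2)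
      (Finset.univ : Finset (U × U × U)).val
      = Finset.univ.val.map (fun u : U => (u, u, u)) := by
    have : Finset.filter (fun p : U × U × U => p.1 = p.2.1 ∧ p.2.1 = p.2.2) Finset.univ
        = Finset.map ⟨fun u : U => (u, u, u), fun a b h => by
            simpa using congrArg (fun p : U × U × U => p.1) h⟩ Finset.univ := by
      ext ⟨a, b, c⟩
      simp only [Finset.mem_filter, Finset.mem_univ, true_and, Finset.mem_map,
        Function.Embedding.coeFn_mk]
      constructor
      · rintro ⟨h1, h2⟩; exact ⟨a, by subst h1; subst h2; rfl⟩
      · rintro ⟨u, hu⟩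
        cases hu; exact ⟨rfl, rfl⟩
    calc Multiset.filter (fun p : U × U × U => p.1 = p.2.1 ∧ p.2.1 = p.2.2)
          (Finset.univ : Finset (U × U × U)).val
        = (Finset.filter (fun p : U × U × U => p.1 = p.2.1 ∧ p.2.1 = p.2.2) Finset.univ).val := rfl
      _ = _ := by rw [this]; rfl
  rw [h2, Multiset.map_map]
  rfl

/-- The multiset of diagonal 3-WL colors is determined by 3-WL indistinguishability. -/
lemma diag_multiset_eq {V W : Type*} [Fintype V] [Fintype W]
    (G : SimpleGraph V) (H : SimpleGraph W) (h3 : WL3Indist G H) (m : ℕ) :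
    (Finset.univ.val.map fun u : V => wl3 G m u u u)
      = (Finset.univ.val.map fun x : W => wl3 H m x x x) := by
  rw [← diag_filter_key G m, ← diag_filter_key H m, h3 m]

section Joint

variable {V W : Type*} [Fintype V] [Fintype W] (G : SimpleGraph V) (H : SimpleGraph W)

/-- Joint coherence of a pair of pairwise features at level `m`: both are
computed by a common function of the round-`m` 3-WL color of `(u,v,v)`. -/
def Joint {β : Type*} (m : ℕ) (F : V → V → β) (F' : W → W → β) : Prop :=
  ∃ f : W3Color m → β,
    (∀ u v, F u v = f (wl3 G m u v v)) ∧ (∀ x y, F' x y = f (wl3 H m x y y))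

variable {G H}

lemma Joint.succ {β : Type*} {m : ℕ} {F : V → V → β} {F' : W → W → β}
    (h : Joint G H m F F') : Joint G H (m + 1) F F' := by
  obtain ⟨f, h1, h2⟩ := h
  exact ⟨fun c => f c.1, h1, h2⟩

lemma Joint.mono {β : Type*} {m m' : ℕ} (hm : m ≤ m') {F : V → V → β} {F' : W → W → β}
    (h : Joint G H m F F') : Joint G H m' F F' := by
  obtain ⟨k, rfl⟩ := Nat.le.dest hm
  clear hm
  induction k with
  | zero => exact h
  | succ n ih => exact ih.succ

lemma Joint.map {β γ : Type*} {m : ℕ} {F : V → V → β} {F' : W → W → β}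
    (h : Joint G H m F F') (φ : β → γ) :
    Joint G H m (fun u v => φ (F u v)) (fun x y => φ (F' x y)) := by
  obtain ⟨f, h1, h2⟩ := h
  exact ⟨fun c => φ (f c), fun u v => by simp only [h1], fun x y => by simp only [h2]⟩

lemma Joint.pair {β γ : Type*} {m : ℕ} {F₁ : V → V → β} {F₁' : W → W → β}
    {F₂ : V → V → γ} {F₂' : W → W → γ}
    (h1 : Joint G H m F₁ F₁') (h2 : Joint G H m F₂ F₂') :
    Joint G H m (fun u v => (F₁ u v, F₂ u v)) (fun x y => (F₁' x y, F₂' x y)) := by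
  obtain ⟨f, hf1, hf2⟩ := h1
  obtain ⟨g, hg1, hg2⟩ := h2
  exact ⟨fun c => (f c, g c), fun u v => by simp only [hf1, hg1], fun x y => by simp only [hf2, hg2]⟩

lemma joint_matrix_mul {m : ℕ} {X : Matrix V V ℝ} {X' : Matrix W W ℝ}
    {Y : Matrix V V ℝ} {Y' : Matrix W W ℝ}
    (hX : Joint G H m X X') (hY : Joint G H m Y Y') :
    Joint G H (m + 2) (X * Y) (X' * Y') := by
  obtain ⟨f, hf1, hf2⟩ := hX
  obtain ⟨g, hg1, hg2⟩ := hY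
  refine ⟨fun c => (c.2.map fun t => f (pairE t.2.1) * g t.1.1).sum, ?_, ?_⟩
  · intro u v
    show (X * Y) u v
        = ((Multiset.map (fun z => (wl3 G (m+1) z v v, wl3 G (m+1) u z v, wl3 G (m+1) u v z))
            Finset.univ.val).map fun t => f (pairE t.2.1) * g t.1.1).sum
    rw [Multiset.map_map]
    have : ∀ z : V, ((fun t : W3Color (m+1) × W3Color (m+1) × W3Color (m+1) =>
          f (pairE t.2.1) * g t.1.1) ∘
        fun z => (wl3 G (m+1) z v v, wl3 G (m+1) u z v, wl3 G (m+1) u v z)) z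
        = X u z * Y z v := by
      intro z
      show f (pairE (wl3 G (m+1) u z v)) * g ((wl3 G (m+1) z v v).1) = _
      have h1 : (wl3 G (m+1) z v v).1 = wl3 G m z v v := rfl
      rw [pairE_wl3, h1, ← hf1, ← hg1]
    rw [Multiset.map_congr rfl fun z _ => this z]
    rw [Matrix.mul_apply]
    rw [Finset.sum]
  · intro x y
    show (X' * Y') x y
        = ((Multiset.map (fun z => (wl3 H (m+1) z y y, wl3 H (m+1) x z y, wl3 H (m+1) x y z))
            Finset.univ.val).map fun t => f (pairE t.2.1) * g t.1.1).sum
    rw [Multiset.map_map]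
    have : ∀ z : W, ((fun t : W3Color (m+1) × W3Color (m+1) × W3Color (m+1) =>
          f (pairE t.2.1) * g t.1.1) ∘
        fun z => (wl3 H (m+1) z y y, wl3 H (m+1) x z y, wl3 H (m+1) x y z)) z
        = X' x z * Y' z y := by
      intro z
      show f (pairE (wl3 H (m+1) x z y)) * g ((wl3 H (m+1) z y y).1) = _
      have h1 : (wl3 H (m+1) z y y).1 = wl3 H m z y y := rfl
      rw [pairE_wl3, h1, ← hf2, ← hg2]
    rw [Multiset.map_congr rfl fun z _ => this z]
    rw [Matrix.mul_apply]
    rw [Finset.sum]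


lemma joint_add {m : ℕ} {X : Matrix V V ℝ} {X' : Matrix W W ℝ}
    {Y : Matrix V V ℝ} {Y' : Matrix W W ℝ}
    (hX : Joint G H m X X') (hY : Joint G H m Y Y') :
    Joint G H m (X + Y) (X' + Y') := by
  obtain ⟨f, hf1, hf2⟩ := hX
  obtain ⟨g, hg1, hg2⟩ := hY
  exact ⟨fun c => f c + g c,
    fun u v => by rw [Matrix.add_apply, hf1, hg1],
    fun x y => by rw [Matrix.add_apply, hf2, hg2]⟩

lemma joint_smul {m : ℕ} (r : ℝ) {X : Matrix V V ℝ} {X' : Matrix W W ℝ}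
    (hX : Joint G H m X X') :
    Joint G H m (r • X) (r • X') := by
  obtain ⟨f, hf1, hf2⟩ := hX
  exact ⟨fun c => r * f c,
    fun u v => by rw [Matrix.smul_apply, hf1, smul_eq_mul],
    fun x y => by rw [Matrix.smul_apply, hf2, smul_eq_mul]⟩

lemma joint_zero (m : ℕ) : Joint G H m (0 : Matrix V V ℝ) (0 : Matrix W W ℝ) :=
  ⟨fun _ => 0, fun _ _ => rfl, fun _ _ => rfl⟩

lemma joint_sum {ι : Type*} (s : Finset ι) (m : ℕ)
    (F : ι → Matrix V V ℝ) (F' : ι → Matrix W W ℝ)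
    (h : ∀ i ∈ s, Joint G H m (F i) (F' i)) :
    Joint G H m (∑ i ∈ s, F i) (∑ i ∈ s, F' i) := by
  classical
  induction s using Finset.induction with
  | empty => exact joint_zero m
  | insert a s hni ih =>
    have e1 : (∑ i ∈ insert a s, F i : Matrix V V ℝ) = F a + ∑ i ∈ s, F i :=
      Finset.sum_insert hni
    have e2 : (∑ i ∈ insert a s, F' i : Matrix W W ℝ) = F' a + ∑ i ∈ s, F' i :=
      Finset.sum_insert hni
    have := joint_add (h _ (Finset.mem_insert_self _ _))
      (ih fun i hi => h i (Finset.mem_insert_of_mem hi))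
    exact (congrArg₂ (fun (X : Matrix V V ℝ) (Y : Matrix W W ℝ) => Joint G H m X Y)
      e1 e2).mpr this

lemma joint_one : Joint G H 0 (1 : Matrix V V ℝ) (1 : Matrix W W ℝ) := by
  refine ⟨fun c => if c.1 = true then 1 else 0, ?_, ?_⟩
  · intro u v
    show (1 : Matrix V V ℝ) u v = if decide (u = v) = true then 1 else 0
    rw [Matrix.one_apply]
    simp
  · intro x y
    show (1 : Matrix W W ℝ) x y = if decide (x = y) = true then 1 else 0
    rw [Matrix.one_apply]
    simp

end Joint

section Entries

/-- Count of neighbours of the first coordinate, read off a round-1 color. -/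
def deg1 (c : W3Color 1) : ℕ :=
  (c.2.filter fun t => t.2.1.2.2.2.1 = true).card

/-- Count of neighbours of the second coordinate, read off a round-1 color. -/
def deg2 (c : W3Color 1) : ℕ :=
  (c.2.filter fun t => t.2.2.2.2.2.2.2 = true).card

lemma deg1_wl3 {V : Type*} [Fintype V] (G : SimpleGraph V) (u v w : V) :
    deg1 (wl3 G 1 u v w) = G.degree u := by
  classical
  have h2 : (wl3 G 1 u v w).2
      = Finset.univ.val.map fun z => (wl3 G 0 z v w, wl3 G 0 u z w, wl3 G 0 u v z) := rfl
  rw [deg1, h2, Multiset.filter_map, Multiset.card_map]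
  have : Multiset.filter
      ((fun t : W3Color 0 × W3Color 0 × W3Color 0 => t.2.1.2.2.2.1 = true) ∘
        fun z => (wl3 G 0 z v w, wl3 G 0 u z w, wl3 G 0 u v z)) Finset.univ.val
      = Multiset.filter (fun z => G.Adj u z) Finset.univ.val := by
    apply Multiset.filter_congr
    intro z _
    show decide (G.Adj u z) = true ↔ G.Adj u z
    simp
  rw [this]
  show (Finset.filter (fun z => G.Adj u z) Finset.univ).card = _
  rw [← SimpleGraph.neighborFinset_eq_filter]
  rfl

lemma deg2_wl3 {V : Type*} [Fintype V] (G : SimpleGraph V) (u v w : V) :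
    deg2 (wl3 G 1 u v w) = G.degree v := by
  classical
  have h2 : (wl3 G 1 u v w).2
      = Finset.univ.val.map fun z => (wl3 G 0 z v w, wl3 G 0 u z w, wl3 G 0 u v z) := rfl
  rw [deg2, h2, Multiset.filter_map, Multiset.card_map]
  have : Multiset.filter
      ((fun t : W3Color 0 × W3Color 0 × W3Color 0 => t.2.2.2.2.2.2.2 = true) ∘
        fun z => (wl3 G 0 z v w, wl3 G 0 u z w, wl3 G 0 u v z)) Finset.univ.val
      = Multiset.filter (fun z => G.Adj v z) Finset.univ.val := by
    apply Multiset.filter_congr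
    intro z _
    show decide (G.Adj v z) = true ↔ G.Adj v z
    simp
  rw [this]
  show (Finset.filter (fun z => G.Adj v z) Finset.univ).card = _
  rw [← SimpleGraph.neighborFinset_eq_filter]
  rfl

/-- Entry function for the chosen graph matrix, as a function of the round-1 color. -/
def entryFn : MatChoice → W3Color 1 → ℝ
  | .adj => fun c => if c.1.2.2.2.1 = true then 1 else 0
  | .lap => fun c =>
      (if c.1.1 = true then (deg1 c : ℝ) else 0) - (if c.1.2.2.2.1 = true then 1 else 0)
  | .normLap => fun c =>
      (Real.sqrt (deg1 c))⁻¹ *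
        ((if c.1.1 = true then (deg1 c : ℝ) else 0) -
          (if c.1.2.2.2.1 = true then 1 else 0)) *
        (Real.sqrt (deg2 c))⁻¹

lemma lapM_apply {V : Type*} [Fintype V] (G : SimpleGraph V) (u v : V) :
    lapM G u v = (if u = v then (G.degree u : ℝ) else 0) - (if G.Adj u v then 1 else 0) := by
  classical
  rw [lapM, Matrix.sub_apply, degM, Matrix.diagonal_apply, adjM, SimpleGraph.adjMatrix_apply]

lemma entryFn_eq {V : Type*} [Fintype V] (G : SimpleGraph V) (cm : MatChoice) (u v : V) :
    matOf cm G u v = entryFn cm (wl3 G 1 u v v) := by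
  classical
  have hfst : (wl3 G 1 u v v).1 = wl3 G 0 u v v := rfl
  have heq : (wl3 G 1 u v v).1.1 = decide (u = v) := rfl
  have hadj : (wl3 G 1 u v v).1.2.2.2.1 = decide (G.Adj u v) := rfl
  cases cm with
  | adj =>
    show adjM G u v = _
    rw [adjM, SimpleGraph.adjMatrix_apply]
    show _ = if (wl3 G 1 u v v).1.2.2.2.1 = true then (1:ℝ) else 0
    rw [hadj]
    simp
  | lap =>
    show lapM G u v = _
    rw [lapM_apply]
    show _ = (if (wl3 G 1 u v v).1.1 = true then ((deg1 (wl3 G 1 u v v) : ℝ)) else 0)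
      - (if (wl3 G 1 u v v).1.2.2.2.1 = true then 1 else 0)
    rw [hadj, heq, deg1_wl3]
    simp
  | normLap =>
    show (Matrix.diagonal (fun v : V => (Real.sqrt (G.degree v))⁻¹) * lapM G *
        Matrix.diagonal (fun v : V => (Real.sqrt (G.degree v))⁻¹)) u v = _
    rw [Matrix.mul_diagonal, Matrix.diagonal_mul, lapM_apply]
    show _ = (Real.sqrt (deg1 (wl3 G 1 u v v)))⁻¹ *
        ((if (wl3 G 1 u v v).1.1 = true then ((deg1 (wl3 G 1 u v v) : ℝ)) else 0) -
          (if (wl3 G 1 u v v).1.2.2.2.1 = true then 1 else 0)) *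
        (Real.sqrt (deg2 (wl3 G 1 u v v)))⁻¹
    rw [hadj, heq, deg1_wl3, deg2_wl3]
    simp [mul_comm, mul_assoc, mul_left_comm]

end Entries

section JointMat

variable {V W : Type*} [Fintype V] [Fintype W] {G : SimpleGraph V} {H : SimpleGraph W}

lemma joint_matOf (cm : MatChoice) : Joint G H 1 (matOf cm G) (matOf cm H) :=
  ⟨entryFn cm, fun u v => entryFn_eq G cm u v, fun x y => entryFn_eq H cm x y⟩

lemma joint_pow (cm : MatChoice) : ∀ k : ℕ,
    Joint G H (1 + 2 * k) (matOf cm G ^ k) (matOf cm H ^ k)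
  | 0 => by
    rw [pow_zero, pow_zero]
    exact joint_one.mono (by omega)
  | k + 1 => by
    rw [pow_succ, pow_succ]
    have h1 := joint_pow cm k
    have h2 := (joint_matOf cm (G := G) (H := H)).mono
      (show 1 ≤ 1 + 2 * k by omega)
    exact (joint_matrix_mul h1 h2).mono (by omega)

/-- Polynomial evaluation on matrices, via the explicit coefficient sum. -/
def evalMat {n : Type*} [Fintype n] (q : Polynomial ℝ) (M : Matrix n n ℝ) : Matrix n n ℝ :=
  ∑ k ∈ Finset.range (q.natDegree + 1), q.coeff k • M ^ k

lemma joint_evalMat (cm : MatChoice) (q : Polynomial ℝ) :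
    Joint G H (1 + 2 * q.natDegree)
      (evalMat q (matOf cm G)) (evalMat q (matOf cm H)) := by
  refine joint_sum _ _ _ _ fun k hk => ?_
  have hk' : k ≤ q.natDegree := by
    have := Finset.mem_range.mp hk; omega
  exact (joint_smul _ (joint_pow cm k)).mono (by omega)

end JointMat

end Aux

section Spectral

variable {n : Type*} [Fintype n] {M : Matrix n n ℝ} {Λ : Finset ℝ} {P : ℝ → Matrix n n ℝ}

lemma IsSpectralDecomp.pow_eq (hd : IsSpectralDecomp M Λ P) (k : ℕ) :
    M ^ k = ∑ lam ∈ Λ, lam ^ k • P lam := by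
  induction k with
  | zero => simp [hd.sum_one]
  | succ k ih =>
    rw [pow_succ, ih, ← hd.sum_smul, Finset.sum_mul_sum]
    refine Finset.sum_congr rfl fun lam hlam => ?_
    rw [Finset.sum_eq_single lam]
    · rw [smul_mul_assoc, mul_smul_comm, hd.idem lam hlam, smul_smul, ← pow_succ]
    · intro mu hmu hne
      rw [smul_mul_assoc, mul_smul_comm, hd.orth lam hlam mu hmu (Ne.symm hne),
        smul_zero, smul_zero]
    · intro h; exact absurd hlam h
  
lemma IsSpectralDecomp.evalMat_eq (hd : IsSpectralDecomp M Λ P) (q : Polynomial ℝ) :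
    evalMat q M = ∑ lam ∈ Λ, q.eval lam • P lam := by
  rw [evalMat]
  calc ∑ k ∈ Finset.range (q.natDegree + 1), q.coeff k • M ^ k
      = ∑ k ∈ Finset.range (q.natDegree + 1), ∑ lam ∈ Λ,
          (q.coeff k * lam ^ k) • P lam := by
        refine Finset.sum_congr rfl fun k _ => ?_
        rw [hd.pow_eq k, Finset.smul_sum]
        refine Finset.sum_congr rfl fun lam _ => ?_
        rw [smul_smul]
    _ = ∑ lam ∈ Λ, ∑ k ∈ Finset.range (q.natDegree + 1),
          (q.coeff k * lam ^ k) • P lam := Finset.sum_comm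
    _ = ∑ lam ∈ Λ, q.eval lam • P lam := by
        refine Finset.sum_congr rfl fun lam _ => ?_
        rw [← Finset.sum_smul, ← Polynomial.eval_eq_sum_range]

lemma IsSpectralDecomp.proj_eq (hd : IsSpectralDecomp M Λ P) {lam : ℝ} (hlam : lam ∈ Λ) :
    P lam = evalMat (Lagrange.basis Λ id lam) M := by
  classical
  rw [hd.evalMat_eq]
  rw [Finset.sum_eq_single lam]
  · have h1 : Polynomial.eval lam (Lagrange.basis Λ id lam) = 1 :=
      Lagrange.eval_basis_self (Set.injOn_id _) hlam
    rw [h1, one_smul]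
  · intro mu hmu hne
    rw [show (mu : ℝ) = id mu from rfl, Lagrange.eval_basis_of_ne (Ne.symm hne) hmu, zero_smul]
  · intro h; exact absurd hlam h

lemma trace_pos_of_proj {P : Matrix n n ℝ} (hsymm : Pᵀ = P) (hidem : P * P = P)
    (hne : P ≠ 0) : 0 < P.trace := by
  classical
  have hent : ∃ u v, P u v ≠ 0 := by
    by_contra hc
    push_neg at hc
    exact hne (Matrix.ext fun u v => hc u v)
  obtain ⟨u0, v0, h0⟩ := hent
  have htr : P.trace = ∑ u, ∑ v, P u v ^ 2 := by
    conv_lhs => rw [← hidem]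
    rw [Matrix.trace]
    refine Finset.sum_congr rfl fun u _ => ?_
    rw [Matrix.diag]
    rw [Matrix.mul_apply]
    refine Finset.sum_congr rfl fun v _ => ?_
    have : P v u = P u v := by
      conv_lhs => rw [← hsymm]
      rfl
    rw [this, sq]
  rw [htr]
  refine Finset.sum_pos' (fun u _ => Finset.sum_nonneg fun v _ => sq_nonneg _) ?_
  refine ⟨u0, Finset.mem_univ _, ?_⟩
  refine Finset.sum_pos' (fun v _ => sq_nonneg _) ⟨v0, Finset.mem_univ _, ?_⟩
  exact pow_two_pos_of_ne_zero h0

lemma moments_vanish {S : Finset ℝ} {c : ℝ → ℝ}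
    (h : ∀ k : ℕ, ∑ lam ∈ S, c lam * lam ^ k = 0) : ∀ lam ∈ S, c lam = 0 := by
  classical
  intro lam0 h0
  set q : Polynomial ℝ := ∏ mu ∈ S.erase lam0, (Polynomial.X - Polynomial.C mu) with hq
  have hsum : ∑ lam ∈ S, c lam * q.eval lam = 0 := by
    calc ∑ lam ∈ S, c lam * q.eval lam
        = ∑ lam ∈ S, ∑ k ∈ Finset.range (q.natDegree + 1),
            q.coeff k * (c lam * lam ^ k) := by
          refine Finset.sum_congr rfl fun lam _ => ?_
          rw [Polynomial.eval_eq_sum_range, Finset.mul_sum]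
          refine Finset.sum_congr rfl fun k _ => ?_
          ring
      _ = ∑ k ∈ Finset.range (q.natDegree + 1), ∑ lam ∈ S,
            q.coeff k * (c lam * lam ^ k) := Finset.sum_comm
      _ = 0 := by
          refine Finset.sum_eq_zero fun k _ => ?_
          rw [← Finset.mul_sum, h k, mul_zero]
  have heval0 : ∀ lam ∈ S, lam ≠ lam0 → q.eval lam = 0 := by
    intro lam hlam hne
    rw [hq, Polynomial.eval_prod]
    refine Finset.prod_eq_zero (Finset.mem_erase.mpr ⟨hne, hlam⟩) ?_
    simp
  have hsingle : ∑ lam ∈ S, c lam * q.eval lam = c lam0 * q.eval lam0 := by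
    rw [Finset.sum_eq_single lam0]
    · intro mu hmu hne
      rw [heval0 mu hmu hne, mul_zero]
    · intro h'; exact absurd h0 h'
  have hq0 : q.eval lam0 ≠ 0 := by
    rw [hq, Polynomial.eval_prod]
    refine Finset.prod_ne_zero_iff.mpr fun mu hmu => ?_
    have : mu ≠ lam0 := (Finset.mem_erase.mp hmu).1
    simp [sub_ne_zero.mpr (Ne.symm this)]
  have := hsingle ▸ hsum
  exact (mul_eq_zero.mp this).resolve_right hq0

end Spectral

section Assemble

variable {V W : Type*} [Fintype V] [Fintype W] {G : SimpleGraph V} {H : SimpleGraph W}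

lemma joint_trace_eq (h3 : WL3Indist G H) {m : ℕ}
    {X : Matrix V V ℝ} {X' : Matrix W W ℝ} (hJ : Joint G H m X X') :
    X.trace = X'.trace := by
  obtain ⟨f, h1, h2⟩ := hJ
  have e1 : X.trace = ((Finset.univ.val.map fun u : V => wl3 G m u u u).map f).sum := by
    rw [Multiset.map_map, Matrix.trace]
    calc ∑ u, X.diag u = ∑ u : V, (f ∘ fun u : V => wl3 G m u u u) u :=
          Finset.sum_congr rfl fun u _ => h1 u u
      _ = _ := rfl
  have e2 : X'.trace = ((Finset.univ.val.map fun x : W => wl3 H m x x x).map f).sum := by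
    rw [Multiset.map_map, Matrix.trace]
    calc ∑ x, X'.diag x = ∑ x : W, (f ∘ fun x : W => wl3 H m x x x) x :=
          Finset.sum_congr rfl fun x _ => h2 x x
      _ = _ := rfl
  rw [e1, e2, diag_multiset_eq G H h3 m]

lemma lambda_eq (c : MatChoice)
    {ΛG : Finset ℝ} {PG : ℝ → Matrix V V ℝ} (hPG : IsSpectralDecomp (matOf c G) ΛG PG)
    {ΛH : Finset ℝ} {PH : ℝ → Matrix W W ℝ} (hPH : IsSpectralDecomp (matOf c H) ΛH PH)
    (h3 : WL3Indist G H) : ΛG = ΛH := by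
  classical
  have htr : ∀ k : ℕ, (matOf c G ^ k).trace = (matOf c H ^ k).trace :=
    fun k => joint_trace_eq h3 (joint_pow c k)
  have hmomG : ∀ k : ℕ, (matOf c G ^ k).trace
      = ∑ lam ∈ ΛG, (PG lam).trace * lam ^ k := by
    intro k
    rw [hPG.pow_eq k, Matrix.trace_sum]
    exact Finset.sum_congr rfl fun lam _ => by
      rw [Matrix.trace_smul, smul_eq_mul, mul_comm]
  have hmomH : ∀ k : ℕ, (matOf c H ^ k).trace
      = ∑ lam ∈ ΛH, (PH lam).trace * lam ^ k := by
    intro k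
    rw [hPH.pow_eq k, Matrix.trace_sum]
    exact Finset.sum_congr rfl fun lam _ => by
      rw [Matrix.trace_smul, smul_eq_mul, mul_comm]
  set S : Finset ℝ := ΛG ∪ ΛH with hS
  set cf : ℝ → ℝ := fun lam =>
    (if lam ∈ ΛG then (PG lam).trace else 0) - (if lam ∈ ΛH then (PH lam).trace else 0)
    with hcf
  have hmom : ∀ k : ℕ, ∑ lam ∈ S, cf lam * lam ^ k = 0 := by
    intro k
    have e1 : ∑ lam ∈ S, (if lam ∈ ΛG then (PG lam).trace else 0) * lam ^ k
        = ∑ lam ∈ ΛG, (PG lam).trace * lam ^ k := by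
      calc ∑ lam ∈ S, (if lam ∈ ΛG then (PG lam).trace else 0) * lam ^ k
          = ∑ lam ∈ S, (if lam ∈ ΛG then (PG lam).trace * lam ^ k else 0) := by
            refine Finset.sum_congr rfl fun lam _ => ?_
            rw [ite_mul, zero_mul]
        _ = ∑ lam ∈ S ∩ ΛG, (PG lam).trace * lam ^ k := Finset.sum_ite_mem _ _ _
        _ = _ := by rw [Finset.inter_eq_right.mpr Finset.subset_union_left]
    have e2 : ∑ lam ∈ S, (if lam ∈ ΛH then (PH lam).trace else 0) * lam ^ k
        = ∑ lam ∈ ΛH, (PH lam).trace * lam ^ k := by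
      calc ∑ lam ∈ S, (if lam ∈ ΛH then (PH lam).trace else 0) * lam ^ k
          = ∑ lam ∈ S, (if lam ∈ ΛH then (PH lam).trace * lam ^ k else 0) := by
            refine Finset.sum_congr rfl fun lam _ => ?_
            rw [ite_mul, zero_mul]
        _ = ∑ lam ∈ S ∩ ΛH, (PH lam).trace * lam ^ k := Finset.sum_ite_mem _ _ _
        _ = _ := by rw [Finset.inter_eq_right.mpr Finset.subset_union_right]
    calc ∑ lam ∈ S, cf lam * lam ^ k
        = ∑ lam ∈ S, ((if lam ∈ ΛG then (PG lam).trace else 0) * lam ^ k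
            - (if lam ∈ ΛH then (PH lam).trace else 0) * lam ^ k) := by
          refine Finset.sum_congr rfl fun lam _ => ?_
          rw [hcf, sub_mul]
      _ = ∑ lam ∈ S, (if lam ∈ ΛG then (PG lam).trace else 0) * lam ^ k
          - ∑ lam ∈ S, (if lam ∈ ΛH then (PH lam).trace else 0) * lam ^ k :=
          Finset.sum_sub_distrib _ _
      _ = 0 := by rw [e1, e2, ← hmomG, ← hmomH, htr, sub_self]
  have hz := moments_vanish hmom
  ext lam
  constructor
  · intro hG'
    have hzl := hz lam (Finset.mem_union_left _ hG')
    rw [hcf] at hzl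
    simp only [if_pos hG'] at hzl
    have tpos : 0 < (PG lam).trace :=
      trace_pos_of_proj (hPG.symm lam hG') (hPG.idem lam hG') (hPG.nonzero lam hG')
    by_contra hnH
    rw [if_neg hnH, sub_zero] at hzl
    exact tpos.ne' hzl
  · intro hH'
    have hzl := hz lam (Finset.mem_union_right _ hH')
    rw [hcf] at hzl
    simp only [if_pos hH'] at hzl
    have tpos : 0 < (PH lam).trace :=
      trace_pos_of_proj (hPH.symm lam hH') (hPH.idem lam hH') (hPH.nonzero lam hH')
    by_contra hnG
    rw [if_neg hnG] at hzl
    have : (PH lam).trace = 0 := by linarith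
    exact tpos.ne' this
  
end Assemble

section Simulate

variable {V W : Type*} [Fintype V] [Fintype W] {G : SimpleGraph V} {H : SimpleGraph W}

lemma node_indist_of_joint {α : Type} {m : ℕ} {F : V → V → α} {F' : W → W → α}
    (hJ : Joint G H m F F') (h3 : WL3Indist G H) : NodeIndist F F' := by
  obtain ⟨f, hf1, hf2⟩ := hJ
  have key : ∀ l : ℕ, ∃ Φ : W3Color (m + 3 * l) → Color α l,
      (∀ u : V, colorFn F l u = Φ (wl3 G (m + 3 * l) u u u)) ∧
      (∀ x : W, colorFn F' l x = Φ (wl3 H (m + 3 * l) x x x)) := by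
    intro l
    induction l with
    | zero => exact ⟨fun _ => (), fun _ => rfl, fun _ => rfl⟩
    | succ l ih =>
      obtain ⟨Φ, hΦ1, hΦ2⟩ := ih
      refine ⟨fun col =>
        (Φ (downN (m + 3 * l) 3 col),
          col.2.map fun t => (Φ (diagE t.1), f (downN m (3 * l + 1) (pairE t.2.1)))),
        ?_, ?_⟩
      · intro u
        show (colorFn F l u, Finset.univ.val.map fun v => (colorFn F l v, F u v)) = _
        have hsnd : (wl3 G (m + 3 * (l + 1)) u u u).2
            = Finset.univ.val.map fun z => (wl3 G (m + 3 * l + 2) z u u,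
                wl3 G (m + 3 * l + 2) u z u, wl3 G (m + 3 * l + 2) u u z) := rfl
        have hfst : downN (m + 3 * l) 3 (wl3 G (m + 3 * (l + 1)) u u u)
            = wl3 G (m + 3 * l) u u u := downN_wl3 G (m + 3 * l) 3 u u u
        refine Prod.ext ?_ ?_
        · show colorFn F l u = Φ (downN (m + 3 * l) 3 (wl3 G (m + 3 * (l + 1)) u u u))
          rw [hfst, hΦ1]
        · show (Finset.univ.val.map fun v : V => (colorFn F l v, F u v))
            = (wl3 G (m + 3 * (l + 1)) u u u).2.map
                fun t => (Φ (diagE t.1), f (downN m (3 * l + 1) (pairE t.2.1)))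
          rw [hsnd, Multiset.map_map]
          refine Multiset.map_congr rfl fun z _ => ?_
          show (colorFn F l z, F u z)
            = (Φ (diagE (wl3 G (m + 3 * l + 2) z u u)),
               f (downN m (3 * l + 1) (pairE (wl3 G (m + 3 * l + 2) u z u))))
          have e1 : diagE (wl3 G (m + 3 * l + 2) z u u) = wl3 G (m + 3 * l) z z z :=
            diagE_wl3 G (m + 3 * l) z u u
          have e2 : pairE (wl3 G (m + 3 * l + 2) u z u) = wl3 G (m + 3 * l + 1) u z z :=
            pairE_wl3 G (m + 3 * l + 1) u z u
          have e3 : downN m (3 * l + 1) (wl3 G (m + 3 * l + 1) u z z) = wl3 G m u z z :=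
            downN_wl3 G m (3 * l + 1) u z z
          rw [e1, e2, e3, ← hΦ1 z, ← hf1 u z]
      · intro x
        show (colorFn F' l x, Finset.univ.val.map fun y => (colorFn F' l y, F' x y)) = _
        have hsnd : (wl3 H (m + 3 * (l + 1)) x x x).2
            = Finset.univ.val.map fun z => (wl3 H (m + 3 * l + 2) z x x,
                wl3 H (m + 3 * l + 2) x z x, wl3 H (m + 3 * l + 2) x x z) := rfl
        have hfst : downN (m + 3 * l) 3 (wl3 H (m + 3 * (l + 1)) x x x)
            = wl3 H (m + 3 * l) x x x := downN_wl3 H (m + 3 * l) 3 x x x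
        refine Prod.ext ?_ ?_
        · show colorFn F' l x = Φ (downN (m + 3 * l) 3 (wl3 H (m + 3 * (l + 1)) x x x))
          rw [hfst, hΦ2]
        · show (Finset.univ.val.map fun y : W => (colorFn F' l y, F' x y))
            = (wl3 H (m + 3 * (l + 1)) x x x).2.map
                fun t => (Φ (diagE t.1), f (downN m (3 * l + 1) (pairE t.2.1)))
          rw [hsnd, Multiset.map_map]
          refine Multiset.map_congr rfl fun z _ => ?_
          show (colorFn F' l z, F' x z)
            = (Φ (diagE (wl3 H (m + 3 * l + 2) z x x)),
               f (downN m (3 * l + 1) (pairE (wl3 H (m + 3 * l + 2) x z x))))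
          have e1 : diagE (wl3 H (m + 3 * l + 2) z x x) = wl3 H (m + 3 * l) z z z :=
            diagE_wl3 H (m + 3 * l) z x x
          have e2 : pairE (wl3 H (m + 3 * l + 2) x z x) = wl3 H (m + 3 * l + 1) x z z :=
            pairE_wl3 H (m + 3 * l + 1) x z x
          have e3 : downN m (3 * l + 1) (wl3 H (m + 3 * l + 1) x z z) = wl3 H m x z z :=
            downN_wl3 H m (3 * l + 1) x z z
          rw [e1, e2, e3, ← hΦ2 z, ← hf2 x z]
  intro l
  obtain ⟨Φ, hΦ1, hΦ2⟩ := key l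
  calc Finset.univ.val.map (colorFn F l)
      = (Finset.univ.val.map fun u : V => wl3 G (m + 3 * l) u u u).map Φ := by
        rw [Multiset.map_map]
        exact Multiset.map_congr rfl fun u _ => hΦ1 u
    _ = (Finset.univ.val.map fun x : W => wl3 H (m + 3 * l) x x x).map Φ := by
        rw [diag_multiset_eq G H h3]
    _ = Finset.univ.val.map (colorFn F' l) := by
        rw [Multiset.map_map]
        exact (Multiset.map_congr rfl fun x _ => hΦ2 x).symm

end Simulate

/-- For each `M ∈ {A, L, L̂}`: if `G` and `H` are
3-WL-indistinguishable, then they are EPWL-indistinguishable with respect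
to `M`. -/
theorem wl3_bounds_epwl {V W : Type*} [Fintype V] [Fintype W]
    (G : SimpleGraph V) (H : SimpleGraph W)
    (hG : ∀ v, 0 < G.degree v) (hH : ∀ w, 0 < H.degree w)
    (c : MatChoice)
    (ΛG : Finset ℝ) (PG : ℝ → Matrix V V ℝ)
    (hPG : IsSpectralDecomp (matOf c G) ΛG PG)
    (ΛH : Finset ℝ) (PH : ℝ → Matrix W W ℝ)
    (hPH : IsSpectralDecomp (matOf c H) ΛH PH)
    (h3 : WL3Indist G H) :
    NodeIndist (projInv ΛG PG) (projInv ΛH PH) := by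
  classical
  have hΛ : ΛG = ΛH := lambda_eq c hPG hPH h3
  subst hΛ
  set N : ℕ := 1 + 2 * ΛG.card with hN
  have hJlam : ∀ lam ∈ ΛG, Joint G H N (PG lam) (PH lam) := by
    intro lam hlam
    have hq : (Lagrange.basis ΛG id lam).natDegree = ΛG.card - 1 :=
      Lagrange.natDegree_basis (Set.injOn_id _) hlam
    rw [hPG.proj_eq hlam, hPH.proj_eq hlam]
    exact (joint_evalMat c (Lagrange.basis ΛG id lam)).mono (by rw [hq, hN]; omega)
  have hJ : Joint G H N (projInv ΛG PG) (projInv ΛG PH) := by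
    refine ⟨fun col => ΛG.val.map fun lam =>
      (lam, dite (Joint G H N (PG lam) (PH lam))
        (fun h => h.choose col) (fun _ => 0)), ?_, ?_⟩
    · intro u v
      show ΛG.val.map (fun lam => (lam, PG lam u v)) = _
      refine Multiset.map_congr rfl fun lam hlam => ?_
      have hJl := hJlam lam hlam
      rw [dif_pos hJl, ← hJl.choose_spec.1 u v]
    · intro x y
      show ΛG.val.map (fun lam => (lam, PH lam x y)) = _
      refine Multiset.map_congr rfl fun lam hlam => ?_
      have hJl := hJlam lam hlam
      rw [dif_pos hJl, ← hJl.choose_spec.2 x y]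
  exact node_indist_of_joint hJ h3

end EPWL
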